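/- arXiv:2111.10282 — 4 statements merged into one kernel-verified Lean document; each statement's English description precedes it below -/
import Mathlib

section
/- Classical upper Bogoliubov (Gibbs–Bogoliubov) inequality: −β⁻¹ log(∫ e^{−β(H₀+U)}) + β⁻¹ log(∫ e^{−βH₀}) ≤ ∫ U p₀, i.e. ΔF ≤ E_{p₀}[U]. -/
open MeasureTheory Real NNReal ENNReal

/-- Classical upper Bogoliubov (Gibbs–Bogoliubov) inequality:
`−β⁻¹ log ∫ e^{−β(H₀+U)} + β⁻¹ log ∫ e^{−βH₀} ≤ ∫ U p₀`, i.e. `ΔF ≤ E_{p₀}[U]`. -/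
theorem gibbs_bogoliubov_upper {Ω : Type*} [MeasurableSpace Ω] (μ : Measure Ω)
    (β : ℝ) (hβ : 0 < β) (H₀ U : Ω → ℝ) (hH₀ : Measurable H₀) (hU : Measurable U)
    (Z Z₀ : ℝ)
    (hZ : Z = ∫ x, Real.exp (-β * (H₀ x + U x)) ∂μ)
    (hZ₀ : Z₀ = ∫ x, Real.exp (-β * H₀ x) ∂μ)
    (hZint : Integrable (fun x => Real.exp (-β * (H₀ x + U x))) μ)
    (hZ₀int : Integrable (fun x => Real.exp (-β * H₀ x)) μ)
    (hZpos : 0 < Z) (hZ₀pos : 0 < Z₀)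
    (p₀ : Ω → ℝ) (hp₀ : p₀ = fun x => Real.exp (-β * H₀ x) / Z₀)
    (hUp₀ : Integrable (fun x => U x * p₀ x) μ) :
    -β⁻¹ * Real.log Z + β⁻¹ * Real.log Z₀ ≤ ∫ x, U x * p₀ x ∂μ := by
  have hp₀pos : ∀ x, 0 < p₀ x := by
    intro x; rw [hp₀]; exact div_pos (exp_pos _) hZ₀pos
  have hp₀meas : Measurable p₀ := by
    rw [hp₀]; exact ((hH₀.const_mul (-β)).exp.div_const _)
  set f : Ω → ℝ≥0 := fun x => Real.toNNReal (p₀ x) with hf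
  have hfmeas : Measurable f := hp₀meas.real_toNNReal
  have hfcoe : ∀ x, (f x : ℝ) = p₀ x := fun x =>
    Real.coe_toNNReal _ (hp₀pos x).le
  set P : Measure Ω := μ.withDensity (fun x => (f x : ℝ≥0∞)) with hP
  -- integral transfer
  have htrans : ∀ g : Ω → ℝ, ∫ x, g x ∂P = ∫ x, p₀ x * g x ∂μ := by
    intro g
    rw [hP, integral_withDensity_eq_integral_smul hfmeas]
    simp only [NNReal.smul_def, smul_eq_mul, hfcoe]
  have hint_iff : ∀ g : Ω → ℝ, Measurable g →
      (Integrable g P ↔ Integrable (fun x => g x * p₀ x) μ) := by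
    intro g hg
    rw [hP, integrable_withDensity_iff (hfmeas.coe_nnreal_ennreal)
      (Filter.Eventually.of_forall fun x => ENNReal.coe_lt_top)]
    simp only [ENNReal.coe_toReal, hfcoe]
  -- p₀ integrates to 1
  have hp₀int : Integrable p₀ μ := by
    rw [hp₀]; exact hZ₀int.div_const _
  have hip₀ : ∫ x, p₀ x ∂μ = 1 := by
    rw [hp₀]
    rw [integral_div, ← hZ₀, div_self hZ₀pos.ne']
  have hprob : IsProbabilityMeasure P := by
    constructor
    rw [hP, withDensity_apply _ MeasurableSet.univ, Measure.restrict_univ]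
    have hfun : (fun x => (f x : ℝ≥0∞)) = fun x => ENNReal.ofReal (p₀ x) := by
      funext x; rw [← hfcoe x, ENNReal.ofReal_coe_nnreal]
    rw [hfun, ← ofReal_integral_eq_lintegral_ofReal hp₀int
      (Filter.Eventually.of_forall fun x => (hp₀pos x).le), hip₀, ENNReal.ofReal_one]
  -- key integrals
  have hUint : Integrable U P := by
    rw [hint_iff U hU]; exact hUp₀
  have hexp_eq : ∀ x, Real.exp (-β * U x) * p₀ x = Real.exp (-β * (H₀ x + U x)) / Z₀ := by
    intro x
    simp only [hp₀]
    rw [← mul_div_assoc, ← Real.exp_add]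
    congr 2
    ring
  have hexpint : Integrable (fun x => Real.exp (-β * U x)) P := by
    rw [hint_iff _ ((hU.const_mul (-β)).exp)]
    simp only [hexp_eq]
    exact hZint.div_const _
  have hIexp : ∫ x, Real.exp (-β * U x) ∂P = Z / Z₀ := by
    rw [htrans]
    simp only [mul_comm (p₀ _), hexp_eq]
    rw [integral_div, ← hZ]
  have hIU : ∫ x, U x ∂P = ∫ x, U x * p₀ x ∂μ := by
    rw [htrans]; simp only [mul_comm]
  -- Jensen
  have hne : NeZero P := ⟨hprob.ne_zero P⟩
  have jensen := convexOn_exp.map_average_le continuous_exp.continuousOn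
    isClosed_univ (Filter.Eventually.of_forall fun x : Ω => Set.mem_univ (-β * U x))
    ((hUint.const_mul (-β))) (by simpa [Function.comp_def] using
      hexpint)
  rw [average_eq_integral, average_eq_integral] at jensen
  have h1 : ∫ x, -β * U x ∂P = -β * ∫ x, U x ∂P := integral_const_mul _ _
  rw [h1, hIU] at jensen
  have jensen' : Real.exp (-β * ∫ x, U x * p₀ x ∂μ) ≤ Z / Z₀ := by
    calc Real.exp (-β * ∫ x, U x * p₀ x ∂μ) ≤ ∫ x, Real.exp (-β * U x) ∂P := jensen
    _ = Z / Z₀ := hIexp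
  have hlog : -β * ∫ x, U x * p₀ x ∂μ ≤ Real.log (Z / Z₀) :=
    (Real.le_log_iff_exp_le (div_pos hZpos hZ₀pos)).mpr jensen'
  rw [Real.log_div hZpos.ne' hZ₀pos.ne'] at hlog
  have hβi : (0:ℝ) < β⁻¹ := inv_pos.mpr hβ
  have hm := mul_le_mul_of_nonneg_left hlog hβi.le
  rw [show β⁻¹ * (-β * ∫ x, U x * p₀ x ∂μ) = -(∫ x, U x * p₀ x ∂μ) by
    field_simp] at hm
  linarith
end

section
/- Classical variational lower bound: for any bounded measurable φ, E_p[U + β⁻¹φ] − β⁻¹ log(E_{p₀}[e^{φ}]) ≤ ΔF. -/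
open MeasureTheory Real

/-- Classical variational lower bound: for any bounded measurable `φ`,
`E_p[U + β⁻¹ φ] − β⁻¹ log E_{p₀}[e^φ] ≤ ΔF`. -/
theorem variational_lower_bound_classical {Ω : Type*} [MeasurableSpace Ω] (μ : Measure Ω)
    (β : ℝ) (hβ : 0 < β) (H₀ U : Ω → ℝ) (hH₀ : Measurable H₀) (hU : Measurable U)
    (H : Ω → ℝ) (hH : H = fun x => H₀ x + U x)
    (Z Z₀ : ℝ)
    (hZ : Z = ∫ x, Real.exp (-β * H x) ∂μ) (hZ₀ : Z₀ = ∫ x, Real.exp (-β * H₀ x) ∂μ)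
    (hZint : Integrable (fun x => Real.exp (-β * H x)) μ)
    (hZ₀int : Integrable (fun x => Real.exp (-β * H₀ x)) μ)
    (hZpos : 0 < Z) (hZ₀pos : 0 < Z₀)
    (p p₀ : Ω → ℝ)
    (hp : p = fun x => Real.exp (-β * H x) / Z)
    (hp₀ : p₀ = fun x => Real.exp (-β * H₀ x) / Z₀)
    (hUp : Integrable (fun x => U x * p x) μ)
    (φ : Ω → ℝ) (hφm : Measurable φ) (C : ℝ) (hφb : ∀ x, |φ x| ≤ C)
    (hφp : Integrable (fun x => φ x * p x) μ)
    (hexp : Integrable (fun x => Real.exp (φ x) * p₀ x) μ) :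
    (∫ x, (U x + β⁻¹ * φ x) * p x ∂μ) - β⁻¹ * Real.log (∫ x, Real.exp (φ x) * p₀ x ∂μ)
      ≤ -β⁻¹ * Real.log (Z / Z₀) := by
  have hβ' : (0:ℝ) < β⁻¹ := inv_pos.mpr hβ
  have hpnn : ∀ x, 0 ≤ p x := by
    intro x; rw [hp]; positivity
  have hpint : Integrable p μ := by rw [hp]; exact hZint.div_const Z
  have hp1 : ∫ x, p x ∂μ = 1 := by
    rw [hp]
    rw [MeasureTheory.integral_div, ← hZ, div_self hZpos.ne']
  have hpt : ∀ x, Real.exp (φ x + β * U x) * p x = (Z₀ / Z) * (Real.exp (φ x) * p₀ x) := by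
    intro x
    rw [hp, hp₀, hH]
    have e1 : Real.exp (φ x + β * U x) * Real.exp (-β * (H₀ x + U x))
        = Real.exp (φ x) * Real.exp (-β * H₀ x) := by
      rw [← Real.exp_add, ← Real.exp_add]; congr 1; ring
    have e2 : (Z₀ / Z) * (Real.exp (φ x) * (Real.exp (-β * H₀ x) / Z₀))
        = (Real.exp (φ x) * Real.exp (-β * H₀ x)) / Z := by
      field_simp
    rw [← mul_div_assoc, e1, ← e2]
  have hgint : Integrable (fun x => Real.exp (φ x + β * U x) * p x) μ := by
    simp only [hpt]
    exact hexp.const_mul _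
  set a := (∫ x, φ x * p x ∂μ) + β * (∫ x, U x * p x ∂μ) with ha
  have hgp : Integrable (fun x => (1 + (φ x + β * U x) - a) * p x) μ := by
    have heq : (fun x => (1 + (φ x + β * U x) - a) * p x)
        = fun x => (1 - a) * p x + (φ x * p x + β * (U x * p x)) := by
      funext x; ring
    rw [heq]
    exact (hpint.const_mul _).add (hφp.add (hUp.const_mul β))
  have hi1 : Integrable (fun x => (1 - a) * p x) μ := hpint.const_mul _
  have hi2 : Integrable (fun x => φ x * p x + β * (U x * p x)) μ :=
    hφp.add (hUp.const_mul β)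
  have hi3 : Integrable (fun x => β * (U x * p x)) μ := hUp.const_mul β
  have hint1 : ∫ x, (1 + (φ x + β * U x) - a) * p x ∂μ = 1 := by
    have heq : (fun x => (1 + (φ x + β * U x) - a) * p x)
        = fun x => (1 - a) * p x + (φ x * p x + β * (U x * p x)) := by
      funext x; ring
    rw [heq, integral_add hi1 hi2, integral_const_mul, integral_add hφp hi3,
      integral_const_mul, hp1]
    ring
  have hJ : Real.exp a ≤ ∫ x, Real.exp (φ x + β * U x) * p x ∂μ := by
    have hle : ∀ x, Real.exp a * ((1 + (φ x + β * U x) - a) * p x)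
        ≤ Real.exp (φ x + β * U x) * p x := by
      intro x
      have h0 := Real.add_one_le_exp ((φ x + β * U x) - a)
      have h1 : Real.exp a * (1 + (φ x + β * U x) - a) ≤ Real.exp (φ x + β * U x) := by
        calc Real.exp a * (1 + (φ x + β * U x) - a)
            = Real.exp a * ((φ x + β * U x - a) + 1) := by ring
          _ ≤ Real.exp a * Real.exp (φ x + β * U x - a) :=
              mul_le_mul_of_nonneg_left h0 (Real.exp_nonneg a)
          _ = Real.exp (φ x + β * U x) := by rw [← Real.exp_add]; congr 1; ring
      calc Real.exp a * ((1 + (φ x + β * U x) - a) * p x)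
          = (Real.exp a * (1 + (φ x + β * U x) - a)) * p x := by ring
        _ ≤ Real.exp (φ x + β * U x) * p x := mul_le_mul_of_nonneg_right h1 (hpnn x)
    have hmono := integral_mono (hgp.const_mul (Real.exp a)) hgint hle
    rwa [integral_const_mul, hint1, mul_one] at hmono
  have hIpos : 0 < ∫ x, Real.exp (φ x + β * U x) * p x ∂μ :=
    lt_of_lt_of_le (Real.exp_pos a) hJ
  have hEq : ∫ x, Real.exp (φ x + β * U x) * p x ∂μ
      = (Z₀ / Z) * ∫ x, Real.exp (φ x) * p₀ x ∂μ := by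
    simp only [hpt]
    rw [integral_const_mul]
  have hE : ∫ x, Real.exp (φ x) * p₀ x ∂μ
      = (Z / Z₀) * ∫ x, Real.exp (φ x + β * U x) * p x ∂μ := by
    rw [hEq]
    field_simp
  have hEpos : 0 < ∫ x, Real.exp (φ x) * p₀ x ∂μ := by
    rw [hE]; positivity
  have hlog : Real.log (Z / Z₀) + a ≤ Real.log (∫ x, Real.exp (φ x) * p₀ x ∂μ) := by
    rw [hE, Real.log_mul (by positivity) hIpos.ne']
    have h2 : a ≤ Real.log (∫ x, Real.exp (φ x + β * U x) * p x ∂μ) := by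
      have := Real.log_le_log (Real.exp_pos a) hJ
      rwa [Real.log_exp] at this
    linarith
  have hLHS : ∫ x, (U x + β⁻¹ * φ x) * p x ∂μ = β⁻¹ * a := by
    have heq : (fun x => (U x + β⁻¹ * φ x) * p x)
        = fun x => U x * p x + β⁻¹ * (φ x * p x) := by
      funext x; ring
    have hi4 : Integrable (fun x => β⁻¹ * (φ x * p x)) μ := hφp.const_mul _
    rw [heq, integral_add hUp hi4, integral_const_mul, ha]
    field_simp
    ring
  rw [hLHS]
  nlinarith [mul_le_mul_of_nonneg_left hlog hβ'.le]
end

section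
/- Quantum Peierls–Bogoliubov upper bound: ΔF = −β⁻¹ log(Tr e^{−βH} / Tr e^{−βH₀}) ≤ Tr(ρ₀ U), where ρ₀ = e^{−βH₀}/Tr(e^{−βH₀}) and U = H − H₀. -/
open Matrix

/-- exp of a Hermitian matrix via its spectral decomposition. -/
lemma herm_exp_eq {m : ℕ} {M : Matrix (Fin m) (Fin m) ℂ} (hM : M.IsHermitian) :
    NormedSpace.exp M = (hM.eigenvectorUnitary : Matrix (Fin m) (Fin m) ℂ) *
      Matrix.diagonal (fun j => (Real.exp (hM.eigenvalues j) : ℂ)) *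
      star (hM.eigenvectorUnitary : Matrix (Fin m) (Fin m) ℂ) := by
  set V := (hM.eigenvectorUnitary : Matrix (Fin m) (Fin m) ℂ) with hVdef
  have hV1 : V * star V = 1 := mem_unitaryGroup_iff.mp hM.eigenvectorUnitary.2
  have hVinv : V⁻¹ = star V := inv_eq_right_inv hV1
  have hVu : IsUnit V := IsUnit.of_mul_eq_one _ hV1
  conv_lhs => rw [hM.spectral_theorem, Unitary.conjStarAlgAut_apply, ← hVinv]
  rw [Matrix.exp_conj V _ hVu, hVinv, Matrix.exp_diagonal]
  congr 2
  funext j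
  simp [Pi.exp_def, ← Complex.exp_eq_exp_ℂ, Function.comp, ← Complex.ofReal_exp]

lemma conj_diag_entry {m : ℕ} (V : Matrix (Fin m) (Fin m) ℂ) (d : Fin m → ℝ) (i : Fin m) :
    (V * Matrix.diagonal (fun j => ((d j : ℝ) : ℂ)) * star V) i i
      = ((∑ j, Complex.normSq (V i j) * d j : ℝ) : ℂ) := by
  push_cast
  rw [Matrix.mul_apply]
  simp only [Matrix.mul_diagonal, Matrix.star_apply, Complex.star_def]
  refine Finset.sum_congr rfl fun j _ => ?_
  rw [mul_comm (V i j), mul_assoc, Complex.mul_conj]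
  ring

lemma peierls_diag {m : ℕ} {M : Matrix (Fin m) (Fin m) ℂ} (hM : M.IsHermitian) (i : Fin m) :
    Real.exp ((M i i).re) ≤ ((NormedSpace.exp M) i i).re := by
  set V := (hM.eigenvectorUnitary : Matrix (Fin m) (Fin m) ℂ) with hVdef
  set μ := hM.eigenvalues with hμdef
  have hV1 : V * star V = 1 := mem_unitaryGroup_iff.mp hM.eigenvectorUnitary.2
  have hw1 : ∑ j, Complex.normSq (V i j) = 1 := by
    have h : (V * star V) i i = 1 := by rw [hV1, Matrix.one_apply_eq]
    rw [Matrix.mul_apply] at h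
    have h2 : ∀ j ∈ Finset.univ, V i j * (star V) j i
        = ((Complex.normSq (V i j) : ℝ) : ℂ) := fun j _ => by
      rw [Matrix.star_apply, Complex.star_def, Complex.mul_conj]
    rw [Finset.sum_congr rfl h2, ← Complex.ofReal_sum] at h
    exact_mod_cast h
  have hcomp : RCLike.ofReal ∘ μ = fun j => ((μ j : ℝ) : ℂ) := rfl
  have hMdiag : (M i i).re = ∑ j, Complex.normSq (V i j) * μ j := by
    conv_lhs => rw [hM.spectral_theorem, Unitary.conjStarAlgAut_apply, hcomp]
    rw [conj_diag_entry, Complex.ofReal_re]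
  have hEdiag : ((NormedSpace.exp M) i i).re
      = ∑ j, Complex.normSq (V i j) * Real.exp (μ j) := by
    rw [herm_exp_eq hM]
    rw [show (fun j => ((Real.exp (μ j) : ℝ) : ℂ)) = fun j => ((Real.exp (μ j) : ℝ) : ℂ) from rfl]
    rw [conj_diag_entry, Complex.ofReal_re]
  rw [hMdiag, hEdiag]
  have jensen := convexOn_exp.map_sum_le (t := Finset.univ)
    (w := fun j => Complex.normSq (V i j)) (p := μ)
    (fun j _ => Complex.normSq_nonneg _) hw1 (fun j _ => Set.mem_univ _)
  simpa [smul_eq_mul] using jensen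

lemma peierls_trace {m : ℕ} {M : Matrix (Fin m) (Fin m) ℂ} (hM : M.IsHermitian) :
    ∑ i, Real.exp ((M i i).re) ≤ (NormedSpace.exp M).trace.re := by
  rw [Matrix.trace, Complex.re_sum]
  exact Finset.sum_le_sum fun i _ => peierls_diag hM i

/-- Quantum Peierls–Bogoliubov upper bound:
`ΔF = −β⁻¹ log(Tr e^{−βH} / Tr e^{−βH₀}) ≤ Tr(ρ₀ U)`, where
`ρ₀ = e^{−βH₀}/Tr(e^{−βH₀})` and `U = H − H₀`. -/
theorem quantum_peierls_bogoliubov {m : ℕ} (β : ℝ) (hβ : 0 < β)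
    (H H₀ U : Matrix (Fin m) (Fin m) ℂ)
    (hH : H.IsHermitian) (hH₀ : H₀.IsHermitian) (hU : U = H - H₀)
    (Z Z₀ : ℝ)
    (hZ : Z = (NormedSpace.exp (((-β : ℝ) : ℂ) • H)).trace.re)
    (hZ₀ : Z₀ = (NormedSpace.exp (((-β : ℝ) : ℂ) • H₀)).trace.re)
    (ρ₀ : Matrix (Fin m) (Fin m) ℂ)
    (hρ₀ : ρ₀ = ((Z₀ : ℂ))⁻¹ • NormedSpace.exp (((-β : ℝ) : ℂ) • H₀)) :
    -β⁻¹ * Real.log (Z / Z₀) ≤ ((ρ₀ * U).trace).re := by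
  rcases Nat.eq_zero_or_pos m with hm | hm
  · subst hm
    have hZ' : Z = 0 := by
      rw [hZ]
      have : (NormedSpace.exp (((-β : ℝ) : ℂ) • H)).trace = 0 := by
        simp [Matrix.trace]
      rw [this]; simp
    have hρ : ((ρ₀ * U).trace) = 0 := by simp [Matrix.trace]
    rw [hZ', hρ]
    simp
  haveI : Nonempty (Fin m) := Fin.pos_iff_nonempty.mp hm
  set V := (hH₀.eigenvectorUnitary : Matrix (Fin m) (Fin m) ℂ) with hVdef
  set μ := hH₀.eigenvalues with hμdef
  have hV1 : V * star V = 1 := mem_unitaryGroup_iff.mp hH₀.eigenvectorUnitary.2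
  have hV1' : star V * V = 1 := mul_eq_one_comm.mp hV1
  have hVinv : V⁻¹ = star V := inv_eq_right_inv hV1
  have hsVinv : (star V)⁻¹ = V := inv_eq_right_inv hV1'
  have hVu : IsUnit V := IsUnit.of_mul_eq_one _ hV1
  have hsVu : IsUnit (star V) := IsUnit.of_mul_eq_one _ hV1'
  set d : Fin m → ℝ := fun i => Real.exp (-β * μ i) with hddef
  set W : Matrix (Fin m) (Fin m) ℂ := star V * U * V with hWdef
  set w : Fin m → ℝ := fun i => (W i i).re with hwdef
  have hcomp : RCLike.ofReal ∘ μ = fun j => ((μ j : ℝ) : ℂ) := rfl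
  -- A₀ decomposition
  have hA₀ : ((-β : ℝ) : ℂ) • H₀
      = V * Matrix.diagonal (fun i => ((-β * μ i : ℝ) : ℂ)) * star V := by
    conv_lhs => rw [hH₀.spectral_theorem, Unitary.conjStarAlgAut_apply, hcomp]
    rw [← smul_mul_assoc, ← mul_smul_comm]
    congr 2
    ext i j
    by_cases h : i = j <;> simp [Matrix.diagonal, h]
  -- exp of A₀
  have hE₀ : NormedSpace.exp (((-β : ℝ) : ℂ) • H₀)
      = V * Matrix.diagonal (fun i => ((d i : ℝ) : ℂ)) * star V := by
    rw [hA₀, ← hVinv, Matrix.exp_conj V _ hVu, hVinv, Matrix.exp_diagonal]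
    congr 1
    congr 1
    rw [Pi.exp_def]
    funext j
    rw [← Complex.exp_eq_exp_ℂ]
    simp only [hddef, Complex.ofReal_exp, Complex.ofReal_mul, Complex.ofReal_neg]
  -- Z₀ as a sum
  have hZ₀' : Z₀ = ∑ i, d i := by
    rw [hZ₀, hE₀, Matrix.trace_mul_cycle, hV1', Matrix.one_mul, Matrix.trace_diagonal,
      ← Complex.ofReal_sum, Complex.ofReal_re]
  have hZ₀pos : 0 < Z₀ := by
    rw [hZ₀']
    exact Finset.sum_pos (fun i _ => Real.exp_pos _) Finset.univ_nonempty
  -- the free-energy term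
  have hT : ((ρ₀ * U).trace).re = Z₀⁻¹ * ∑ i, d i * w i := by
    rw [hρ₀, Matrix.smul_mul, Matrix.trace_smul, hE₀]
    have htr : (V * Matrix.diagonal (fun i => ((d i : ℝ) : ℂ)) * star V * U).trace
        = ∑ i, W i i * ((d i : ℝ) : ℂ) := by
      have e1 : V * Matrix.diagonal (fun i => ((d i : ℝ) : ℂ)) * star V * U
          = (V * Matrix.diagonal (fun i => ((d i : ℝ) : ℂ))) * (star V * U) := by
        rw [Matrix.mul_assoc]
      rw [e1, Matrix.trace_mul_comm]
      have e2 : star V * U * (V * Matrix.diagonal (fun i => ((d i : ℝ) : ℂ)))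
          = W * Matrix.diagonal (fun i => ((d i : ℝ) : ℂ)) := by
        rw [hWdef]; exact (Matrix.mul_assoc _ _ _).symm
      rw [e2, Matrix.trace]
      refine Finset.sum_congr rfl fun i _ => ?_
      rw [Matrix.diag_apply, Matrix.mul_diagonal]
    rw [htr]
    rw [smul_eq_mul, ← Complex.ofReal_inv, Complex.re_ofReal_mul, Complex.re_sum]
    congr 1
    refine Finset.sum_congr rfl fun i _ => ?_
    rw [Complex.mul_re]
    simp [hwdef, mul_comm]
  -- conjugated Hamiltonian M
  have hAH : (((-β : ℝ) : ℂ) • H).IsHermitian := by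
    have hs : star (((-β : ℝ) : ℂ)) = ((-β : ℝ) : ℂ) := by
      rw [Complex.star_def, Complex.conj_ofReal]
    rw [Matrix.IsHermitian, Matrix.conjTranspose_smul, hs, hH.eq]
  set M : Matrix (Fin m) (Fin m) ℂ := star V * (((-β : ℝ) : ℂ) • H) * V with hMdef
  have hMherm : M.IsHermitian := Matrix.isHermitian_conjTranspose_mul_mul V hAH
  have hexpM : NormedSpace.exp M
      = star V * NormedSpace.exp (((-β : ℝ) : ℂ) • H) * V := by
    have hM2 : M = star V * (((-β : ℝ) : ℂ) • H) * (star V)⁻¹ := by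
      rw [hsVinv]
    rw [hM2, Matrix.exp_conj (star V) _ hsVu, hsVinv]
  have hZM : Z = (NormedSpace.exp M).trace.re := by
    rw [hZ, hexpM, Matrix.trace_mul_cycle, hV1, Matrix.one_mul]
  -- diagonal of M
  have hHsum : H = H₀ + U := by rw [hU]; abel
  have hsplit : M = Matrix.diagonal (fun i => ((-β * μ i : ℝ) : ℂ))
      + ((-β : ℝ) : ℂ) • W := by
    rw [hMdef, hHsum, smul_add, Matrix.mul_add, Matrix.add_mul]
    refine congrArg₂ (· + ·) ?_ ?_
    · rw [mul_smul_comm, smul_mul_assoc, (by have h := hH₀.conjStarAlgAut_star_eigenvectorUnitary; rwa [Unitary.conjStarAlgAut_apply, Unitary.coe_star, star_star] at h : star V * H₀ * V = Matrix.diagonal (RCLike.ofReal ∘ hH₀.eigenvalues)), hcomp]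
      ext i j
      by_cases h : i = j <;> simp [Matrix.diagonal, h]
    · rw [mul_smul_comm, smul_mul_assoc, hWdef]
  have hdiagM : ∀ i, (M i i).re = -β * μ i + -β * w i := by
    intro i
    rw [hsplit]
    have : (Matrix.diagonal (fun i => ((-β * μ i : ℝ) : ℂ)) + ((-β : ℝ) : ℂ) • W) i i
        = ((-β * μ i : ℝ) : ℂ) + ((-β : ℝ) : ℂ) * W i i := by
      simp [Matrix.add_apply, Matrix.smul_apply, smul_eq_mul]
    rw [this, Complex.add_re, Complex.ofReal_re, Complex.re_ofReal_mul]
  -- Peierls inequality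
  have hPei : ∑ i, d i * Real.exp (-β * w i) ≤ Z := by
    rw [hZM]
    refine le_trans (le_of_eq ?_) (peierls_trace hMherm)
    refine Finset.sum_congr rfl fun i _ => ?_
    rw [hdiagM i, Real.exp_add, hddef]
  -- Jensen
  set T : ℝ := Z₀⁻¹ * ∑ i, d i * w i with hTdef
  have hjensen : Real.exp (-β * T) ≤ Z₀⁻¹ * ∑ i, d i * Real.exp (-β * w i) := by
    have h1 : ∑ i, Z₀⁻¹ * d i = 1 := by
      rw [← Finset.mul_sum, ← hZ₀', inv_mul_cancel₀ (ne_of_gt hZ₀pos)]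
    have := convexOn_exp.map_sum_le (t := Finset.univ)
      (w := fun i => Z₀⁻¹ * d i) (p := fun i => -β * w i)
      (fun i _ => mul_nonneg (inv_nonneg.mpr hZ₀pos.le) (Real.exp_pos _).le)
      h1 (fun i _ => Set.mem_univ _)
    simp only [smul_eq_mul] at this
    calc Real.exp (-β * T) = Real.exp (∑ i, Z₀⁻¹ * d i * (-β * w i)) := by
          congr 1
          rw [hTdef, Finset.mul_sum, Finset.mul_sum]
          exact Finset.sum_congr rfl fun i _ => by ring
      _ ≤ ∑ i, Z₀⁻¹ * d i * Real.exp (-β * w i) := this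
      _ = Z₀⁻¹ * ∑ i, d i * Real.exp (-β * w i) := by
          rw [Finset.mul_sum]
          refine Finset.sum_congr rfl fun i _ => ?_
          ring
  have hZdiv : Real.exp (-β * T) ≤ Z / Z₀ := by
    rw [div_eq_inv_mul]
    exact hjensen.trans (mul_le_mul_of_nonneg_left hPei (inv_nonneg.mpr hZ₀pos.le))
  have hZdivpos : 0 < Z / Z₀ := lt_of_lt_of_le (Real.exp_pos _) hZdiv
  have hlog : -β * T ≤ Real.log (Z / Z₀) :=
    (Real.le_log_iff_exp_le hZdivpos).mpr hZdiv
  have hTfinal : ((ρ₀ * U).trace).re = T := hT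
  rw [hTfinal]
  have hβinv : 0 < β⁻¹ := inv_pos.mpr hβ
  have h1 := mul_le_mul_of_nonneg_left hlog hβinv.le
  have h2 : β⁻¹ * (-β * T) = -T := by
    rw [neg_mul, mul_neg, ← mul_assoc, inv_mul_cancel₀ (ne_of_gt hβ), one_mul]
  linarith
end

section
/- Two-sided quantum Bogoliubov inequality: Tr(ρ U) ≤ −β⁻¹ log(Z/Z₀) ≤ Tr(ρ₀ U). -/
open Matrix

section helpers

variable {n : ℕ}

lemma exp_hermitian_eq {A : Matrix (Fin n) (Fin n) ℂ} (hA : A.IsHermitian) :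
    NormedSpace.exp A =
      (hA.eigenvectorUnitary : Matrix (Fin n) (Fin n) ℂ) *
        diagonal (fun i => Complex.exp (hA.eigenvalues i)) *
        star (hA.eigenvectorUnitary : Matrix (Fin n) (Fin n) ℂ) := by
  set V := (hA.eigenvectorUnitary : Matrix (Fin n) (Fin n) ℂ) with hVdef
  have hV : V * star V = 1 := mem_unitaryGroup_iff.mp hA.eigenvectorUnitary.2
  have hV' : star V * V = 1 := mem_unitaryGroup_iff'.mp hA.eigenvectorUnitary.2
  have hinv : V⁻¹ = star V := inv_eq_right_inv hV
  have hU : IsUnit V := ⟨⟨V, star V, hV, hV'⟩, rfl⟩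
  conv_lhs => rw [hA.spectral_theorem, Unitary.conjStarAlgAut_apply, ← hinv]
  rw [Matrix.exp_conj V _ hU, hinv, Matrix.exp_diagonal]
  congr 2
  funext i
  simp [Pi.exp_def, Function.comp, ← Complex.exp_eq_exp_ℂ]

end helpers

section helpers2

variable {n : ℕ}

lemma herm_diag_real {M : Matrix (Fin n) (Fin n) ℂ} (hM : M.IsHermitian) (i : Fin n) :
    M i i = ((M i i).re : ℂ) := by
  have : (starRingEnd ℂ) (M i i) = M i i := by
    conv_rhs => rw [← hM.eq]
    rfl
  exact (Complex.conj_eq_iff_re.mp this).symm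

lemma trace_exp_re_eq {A : Matrix (Fin n) (Fin n) ℂ} (hA : A.IsHermitian) :
    (NormedSpace.exp A).trace.re = ∑ i, Real.exp (hA.eigenvalues i) := by
  rw [exp_hermitian_eq hA, trace_mul_cycle,
    mem_unitaryGroup_iff'.mp hA.eigenvectorUnitary.2, one_mul, trace_diagonal]
  rw [Complex.re_sum]
  exact Finset.sum_congr rfl fun i _ => Complex.exp_ofReal_re _

lemma trace_exp_pos (hn : 0 < n) {A : Matrix (Fin n) (Fin n) ℂ} (hA : A.IsHermitian) :
    0 < (NormedSpace.exp A).trace.re := by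
  rw [trace_exp_re_eq hA]
  have : Nonempty (Fin n) := ⟨⟨0, hn⟩⟩
  exact Finset.sum_pos (fun i _ => Real.exp_pos _) Finset.univ_nonempty

lemma trace_exp_mul_re {A B : Matrix (Fin n) (Fin n) ℂ} (hA : A.IsHermitian)
    (hB : B.IsHermitian) :
    ((NormedSpace.exp A * B).trace).re
      = ∑ i, Real.exp (hA.eigenvalues i) *
          (((star (hA.eigenvectorUnitary : Matrix (Fin n) (Fin n) ℂ)) * B *
            (hA.eigenvectorUnitary : Matrix (Fin n) (Fin n) ℂ)) i i).re := by
  set V := (hA.eigenvectorUnitary : Matrix (Fin n) (Fin n) ℂ) with hVdef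
  set M := star V * B * V with hMdef
  have hM : M.IsHermitian := by
    rw [hMdef, Matrix.star_eq_conjTranspose]
    exact isHermitian_conjTranspose_mul_mul V hB
  have h1 : NormedSpace.exp A * B
      = V * (diagonal (fun i => Complex.exp (hA.eigenvalues i))) * (star V * B) := by
    rw [exp_hermitian_eq hA, ← hVdef, mul_assoc]
  rw [h1, trace_mul_comm, ← mul_assoc (star V * B) V _, ← hMdef]
  rw [Matrix.trace]
  rw [Complex.re_sum]
  refine Finset.sum_congr rfl fun i _ => ?_
  rw [Matrix.diag_apply, Matrix.mul_diagonal]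
  rw [herm_diag_real hM i, ← Complex.ofReal_exp, ← Complex.ofReal_mul, Complex.ofReal_re,
    mul_comm]
  simp

end helpers2

lemma bogo_key {n : ℕ} (hn : 0 < n) {A B : Matrix (Fin n) (Fin n) ℂ}
    (hA : A.IsHermitian) (hB : B.IsHermitian) :
    ((NormedSpace.exp A * B).trace).re / ((NormedSpace.exp A).trace).re
      ≤ Real.log (((NormedSpace.exp (A + B)).trace).re)
        - Real.log (((NormedSpace.exp A).trace).re) := by
  have hne : Nonempty (Fin n) := ⟨⟨0, hn⟩⟩
  set V := (hA.eigenvectorUnitary : Matrix (Fin n) (Fin n) ℂ) with hVdef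
  have hV : V * star V = 1 := mem_unitaryGroup_iff.mp hA.eigenvectorUnitary.2
  have hV' : star V * V = 1 := mem_unitaryGroup_iff'.mp hA.eigenvectorUnitary.2
  set a := hA.eigenvalues with hadef
  set M := star V * B * V with hMdef
  have hM : M.IsHermitian := by
    rw [hMdef, Matrix.star_eq_conjTranspose]
    exact isHermitian_conjTranspose_mul_mul V hB
  set b := fun i => (M i i).re with hbdef
  have hC : (A + B).IsHermitian := hA.add hB
  set W := (hC.eigenvectorUnitary : Matrix (Fin n) (Fin n) ℂ) with hWdef
  have hW : W * star W = 1 := mem_unitaryGroup_iff.mp hC.eigenvectorUnitary.2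
  have hW' : star W * W = 1 := mem_unitaryGroup_iff'.mp hC.eigenvectorUnitary.2
  set ν := hC.eigenvalues with hνdef
  set P := star V * W with hPdef
  have hsP : star P = star W * V := by rw [hPdef, StarMul.star_mul, star_star]
  have hPP : P * star P = 1 := by
    rw [hPdef, hsP, mul_assoc, ← mul_assoc W (star W) V, hW, one_mul, hV']
  have hPP' : star P * P = 1 := by
    rw [hPdef, hsP, mul_assoc, ← mul_assoc V (star V) W, hV, one_mul, hW']
  set w := fun i j => Complex.normSq (P i j) with hwdef
  have hw0 : ∀ i j, 0 ≤ w i j := fun i j => Complex.normSq_nonneg _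
  -- row sums
  have hrow : ∀ i, ∑ j, w i j = 1 := by
    intro i
    have h1 : (P * star P) i i = 1 := by rw [hPP, Matrix.one_apply_eq]
    have h2 : (P * star P) i i = ∑ j, ((w i j : ℝ) : ℂ) := by
      rw [Matrix.mul_apply]
      refine Finset.sum_congr rfl fun j _ => ?_
      rw [Matrix.star_apply, ← Complex.mul_conj]
      rfl
    have := h2 ▸ h1
    have := congrArg Complex.re this
    simpa [Complex.re_sum] using this
  -- column sums
  have hcol : ∀ j, ∑ i, w i j = 1 := by
    intro j
    have h1 : (star P * P) j j = 1 := by rw [hPP', Matrix.one_apply_eq]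
    have h2 : (star P * P) j j = ∑ i, ((w i j : ℝ) : ℂ) := by
      rw [Matrix.mul_apply]
      refine Finset.sum_congr rfl fun i _ => ?_
      rw [Matrix.star_apply, mul_comm, ← Complex.mul_conj]
      rfl
    have := h2 ▸ h1
    have := congrArg Complex.re this
    simpa [Complex.re_sum] using this
  -- diagonal identity
  have hdiag : ∀ i, a i + b i = ∑ j, w i j * ν j := by
    intro i
    have hL : (star V * (A + B) * V) i i = ((a i : ℝ) : ℂ) + M i i := by
      have : star V * (A + B) * V = diagonal (RCLike.ofReal ∘ a) + M := by
        rw [hMdef, ← (show star V * A * V = diagonal (RCLike.ofReal ∘ a) by simpa only [Unitary.conjStarAlgAut_apply, star_star, Unitary.coe_star] using hA.conjStarAlgAut_star_eigenvectorUnitary), mul_add, add_mul]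
      rw [this, Matrix.add_apply, Matrix.diagonal_apply_eq]
      rfl
    have hR : (star V * (A + B) * V) i i = ∑ j, ((w i j * ν j : ℝ) : ℂ) := by
      have hconj : star V * (A + B) * V
          = P * diagonal (RCLike.ofReal ∘ ν) * star P := by
        conv_lhs => rw [hC.spectral_theorem, Unitary.conjStarAlgAut_apply]
        rw [hPdef, hsP]
        simp only [← hWdef, ← hνdef, mul_assoc]
      rw [hconj, Matrix.mul_apply]
      refine Finset.sum_congr rfl fun j _ => ?_
      rw [Matrix.mul_diagonal, Matrix.star_apply]
      have h3 : P i j * (RCLike.ofReal (ν j) : ℂ) * star (P i j)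
          = ((w i j * ν j : ℝ) : ℂ) := by
        have h4 : (RCLike.ofReal (ν j) : ℂ) = ((ν j : ℝ) : ℂ) := rfl
        rw [h4, Complex.star_def,
          show P i j * ((ν j : ℝ) : ℂ) * (starRingEnd ℂ) (P i j)
            = ((ν j : ℝ) : ℂ) * (P i j * (starRingEnd ℂ) (P i j)) from by ring,
          Complex.mul_conj]
        push_cast
        ring
      simpa [Function.comp] using h3
    have := hL.symm.trans hR
    have := congrArg Complex.re this
    simpa [Complex.re_sum, hbdef] using this
  -- traces
  have hT0 : ((NormedSpace.exp A).trace).re = ∑ i, Real.exp (a i) := trace_exp_re_eq hA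
  have hT1 : ((NormedSpace.exp (A + B)).trace).re = ∑ j, Real.exp (ν j) := trace_exp_re_eq hC
  have hT0pos : 0 < ((NormedSpace.exp A).trace).re := trace_exp_pos hn hA
  have hT1pos : 0 < ((NormedSpace.exp (A + B)).trace).re := trace_exp_pos hn hC
  set T₀ := ((NormedSpace.exp A).trace).re
  set T₁ := ((NormedSpace.exp (A + B)).trace).re
  -- step 1 : peierls
  have step1 : ∑ i, Real.exp (a i + b i) ≤ T₁ := by
    have jensen : ∀ i, Real.exp (a i + b i) ≤ ∑ j, w i j * Real.exp (ν j) := by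
      intro i
      rw [hdiag i]
      have := convexOn_exp.map_sum_le (t := Finset.univ) (w := w i) (p := ν)
        (fun j _ => hw0 i j) (hrow i) (fun j _ => Set.mem_univ _)
      simpa using this
    calc ∑ i, Real.exp (a i + b i) ≤ ∑ i, ∑ j, w i j * Real.exp (ν j) :=
          Finset.sum_le_sum fun i _ => jensen i
      _ = ∑ j, (∑ i, w i j) * Real.exp (ν j) := by
          rw [Finset.sum_comm]
          exact Finset.sum_congr rfl fun j _ => (Finset.sum_mul _ _ _).symm
      _ = ∑ j, Real.exp (ν j) := by
          refine Finset.sum_congr rfl fun j _ => ?_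
          rw [hcol j, one_mul]
      _ = T₁ := hT1.symm
  -- step 2 : Jensen with Gibbs weights
  have hTrB : ((NormedSpace.exp A * B).trace).re = ∑ i, Real.exp (a i) * b i :=
    trace_exp_mul_re hA hB
  have hwsum : ∑ i, Real.exp (a i) / T₀ = 1 := by
    rw [← Finset.sum_div, ← hT0, div_self (ne_of_gt hT0pos)]
  have step2 : Real.exp (((NormedSpace.exp A * B).trace).re / T₀) ≤ T₁ / T₀ := by
    have jensen2 := convexOn_exp.map_sum_le (t := Finset.univ)
      (w := fun i => Real.exp (a i) / T₀) (p := b)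
      (fun i _ => div_nonneg (Real.exp_pos _).le hT0pos.le) hwsum
      (fun i _ => Set.mem_univ _)
    have e1 : ∑ i, (Real.exp (a i) / T₀) • b i
        = ((NormedSpace.exp A * B).trace).re / T₀ := by
      rw [hTrB, Finset.sum_div]
      exact Finset.sum_congr rfl fun i _ => by rw [smul_eq_mul]; ring
    have e2 : ∑ i, (Real.exp (a i) / T₀) • Real.exp (b i)
        = (∑ i, Real.exp (a i + b i)) / T₀ := by
      rw [Finset.sum_div]
      refine Finset.sum_congr rfl fun i _ => ?_
      rw [smul_eq_mul, Real.exp_add]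
      ring
    rw [e1, e2] at jensen2
    exact jensen2.trans ((div_le_div_iff_of_pos_right hT0pos).mpr step1)
  have : ((NormedSpace.exp A * B).trace).re / T₀ ≤ Real.log (T₁ / T₀) :=
    (Real.le_log_iff_exp_le (div_pos hT1pos hT0pos)).mpr step2
  rwa [Real.log_div (ne_of_gt hT1pos) (ne_of_gt hT0pos)] at this

lemma smul_real_hermitian {n : ℕ} (r : ℝ) {X : Matrix (Fin n) (Fin n) ℂ}
    (hX : X.IsHermitian) : (((r : ℝ) : ℂ) • X).IsHermitian := by
  rw [Matrix.IsHermitian, conjTranspose_smul, hX.eq]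
  congr 1
  exact Complex.conj_ofReal r

lemma trace_smul_mul_re {n : ℕ} (r : ℝ) (E U : Matrix (Fin n) (Fin n) ℂ) :
    ((E * (((r : ℝ) : ℂ) • U)).trace).re = r * ((E * U).trace).re := by
  rw [mul_smul_comm, trace_smul, smul_eq_mul, Complex.re_ofReal_mul]

/-- Two-sided quantum Bogoliubov inequality:
`Tr(ρ U) ≤ −β⁻¹ log(Z/Z₀) ≤ Tr(ρ₀ U)` for `H = H₀ + U`. -/
theorem quantum_two_sided_bogoliubov {m : ℕ} (β : ℝ) (hβ : 0 < β)
    (H H₀ U : Matrix (Fin m) (Fin m) ℂ)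
    (hH₀ : H₀.IsHermitian) (hUh : U.IsHermitian) (hH : H = H₀ + U)
    (Z Z₀ : ℝ)
    (hZ : Z = (NormedSpace.exp (((-β : ℝ) : ℂ) • H)).trace.re)
    (hZ₀ : Z₀ = (NormedSpace.exp (((-β : ℝ) : ℂ) • H₀)).trace.re)
    (ρ ρ₀ : Matrix (Fin m) (Fin m) ℂ)
    (hρ : ρ = ((Z : ℂ))⁻¹ • NormedSpace.exp (((-β : ℝ) : ℂ) • H))
    (hρ₀ : ρ₀ = ((Z₀ : ℂ))⁻¹ • NormedSpace.exp (((-β : ℝ) : ℂ) • H₀)) :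
    ((ρ * U).trace).re ≤ -β⁻¹ * Real.log (Z / Z₀) ∧
      -β⁻¹ * Real.log (Z / Z₀) ≤ ((ρ₀ * U).trace).re := by
  rcases Nat.eq_zero_or_pos m with hm | hm
  · subst hm
    have hZ' : Z = 0 := by simp [hZ, Matrix.trace]
    have hZ₀' : Z₀ = 0 := by simp [hZ₀, Matrix.trace]
    constructor <;> simp [hZ', hZ₀', Matrix.trace]
  · have hHh : H.IsHermitian := hH ▸ hH₀.add hUh
    have hA₀ : ((((-β : ℝ)) : ℂ) • H₀).IsHermitian := smul_real_hermitian _ hH₀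
    have hAH : ((((-β : ℝ)) : ℂ) • H).IsHermitian := smul_real_hermitian _ hHh
    have hBU : ((((-β : ℝ)) : ℂ) • U).IsHermitian := smul_real_hermitian _ hUh
    have hBU' : ((((β : ℝ)) : ℂ) • U).IsHermitian := smul_real_hermitian _ hUh
    have hZpos : 0 < Z := hZ ▸ trace_exp_pos hm hAH
    have hZ₀pos : 0 < Z₀ := hZ₀ ▸ trace_exp_pos hm hA₀
    set E := NormedSpace.exp (((-β : ℝ) : ℂ) • H) with hE
    set E₀ := NormedSpace.exp (((-β : ℝ) : ℂ) • H₀) with hE₀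
    set c := ((E * U).trace).re with hc
    set c₀ := ((E₀ * U).trace).re with hc₀
    have htr : ((ρ * U).trace).re = Z⁻¹ * c := by
      rw [hρ, Matrix.smul_mul, trace_smul, smul_eq_mul, ← Complex.ofReal_inv,
        Complex.re_ofReal_mul, hc]
    have htr₀ : ((ρ₀ * U).trace).re = Z₀⁻¹ * c₀ := by
      rw [hρ₀, Matrix.smul_mul, trace_smul, smul_eq_mul, ← Complex.ofReal_inv,
        Complex.re_ofReal_mul, hc₀]
    have hD : Real.log (Z / Z₀) = Real.log Z - Real.log Z₀ :=
      Real.log_div (ne_of_gt hZpos) (ne_of_gt hZ₀pos)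
    -- first application : A = -β H₀, B = -β U
    have hsum1 : (((-β : ℝ) : ℂ) • H₀ + ((-β : ℝ) : ℂ) • U) = ((-β : ℝ) : ℂ) • H := by
      rw [hH, smul_add]
    have key1 := bogo_key hm hA₀ hBU
    rw [hsum1, ← hE, ← hE₀, ← hZ, ← hZ₀, trace_smul_mul_re, ← hc₀] at key1
    -- second application : A = -β H, B = β U
    have hsum2 : (((-β : ℝ) : ℂ) • H + ((β : ℝ) : ℂ) • U) = ((-β : ℝ) : ℂ) • H₀ := by
      rw [hH, smul_add, add_assoc, ← add_smul,
        show (((-β : ℝ)) : ℂ) + ((β : ℝ) : ℂ) = 0 by push_cast; ring, zero_smul, add_zero]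
    have key2 := bogo_key hm hAH hBU'
    rw [hsum2, ← hE, ← hE₀, ← hZ, ← hZ₀, trace_smul_mul_re, ← hc] at key2
    constructor
    · -- Tr(ρ U) ≤ -β⁻¹ log (Z/Z₀)
      rw [htr, hD]
      have h1 := mul_le_mul_of_nonneg_left key2 (le_of_lt (inv_pos.mpr hβ))
      have e1 : β⁻¹ * (β * c / Z) = Z⁻¹ * c := by field_simp
      rw [e1] at h1
      linarith
    · rw [htr₀, hD]
      have h1 := mul_le_mul_of_nonneg_left key1 (le_of_lt (inv_pos.mpr hβ))
      have e1 : β⁻¹ * (-β * c₀ / Z₀) = -(Z₀⁻¹ * c₀) := by field_simp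
      rw [e1] at h1
      linarith
end
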